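/- Let F be a convex class of probability measures on Ω and T : F → A ⊆ ℝ^k be mixture-continuous and surjective onto A. Let S : A × Ω → ℝ be (strictly) F-consistent for T and let ‖·‖ be a norm on ℝ^k. Then S is (strictly) metrically F-order-sensitive for T relative to ‖·‖ if and only if for all F ∈ F with t = T(F) and all x, z ∈ A: ‖x − t‖ = ‖z − t‖ implies S̄(x,F) = S̄(z,F). -/
import Mathlib


open MeasureTheory ENNReal

noncomputable def escore {α Ω : Type*} [MeasurableSpace Ω]
    (S : α → Ω → ℝ) (x : α) (F : Measure Ω) : ℝ :=
  ∫ y, S x y ∂F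

/-- The mixture `(1 - lam) • F + lam • G` of two measures. -/
noncomputable def mix {Ω : Type*} [MeasurableSpace Ω]
    (F G : Measure Ω) (lam : ℝ) : Measure Ω :=
  ENNReal.ofReal (1 - lam) • F + ENNReal.ofReal lam • G

/-- The class `𝓕` is convex (closed under mixtures). -/
def MixConvex {Ω : Type*} [MeasurableSpace Ω] (𝓕 : Set (Measure Ω)) : Prop :=
  ∀ F ∈ 𝓕, ∀ G ∈ 𝓕, ∀ lam ∈ Set.Icc (0:ℝ) 1, mix F G lam ∈ 𝓕

/-- `S` is an `𝓕`-consistent scoring function for `T` on the action domain `A`. -/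
def Consistent {α Ω : Type*} [MeasurableSpace Ω]
    (𝓕 : Set (Measure Ω)) (A : Set α) (T : Measure Ω → α) (S : α → Ω → ℝ) : Prop :=
  ∀ F ∈ 𝓕, ∀ x ∈ A, escore S (T F) F ≤ escore S x F

/-- `S` is a strictly `𝓕`-consistent scoring function for `T` on the action domain `A`. -/
def StrictlyConsistent {α Ω : Type*} [MeasurableSpace Ω]
    (𝓕 : Set (Measure Ω)) (A : Set α) (T : Measure Ω → α) (S : α → Ω → ℝ) : Prop :=
  Consistent 𝓕 A T S ∧
    ∀ F ∈ 𝓕, ∀ x ∈ A, escore S x F = escore S (T F) F → x = T F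

/-- `T` is mixture-continuous: `fun lam => T ((1-lam) • F + lam • G)` is continuous on `[0,1]`. -/
def MixContinuous {Ω : Type*} [MeasurableSpace Ω] {k : ℕ}
    (𝓕 : Set (Measure Ω)) (T : Measure Ω → (Fin k → ℝ)) : Prop :=
  ∀ F ∈ 𝓕, ∀ G ∈ 𝓕, ContinuousOn (fun lam => T (mix F G lam)) (Set.Icc (0:ℝ) 1)

/-- The `ℓ^p`-norm on `ℝ^k`, for `p ∈ [1, ∞]` (given as an extended real). -/
noncomputable def lpNorm {k : ℕ} (p : ℝ≥0∞) (x : Fin k → ℝ) : ℝ :=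
  if p = ⊤ then ⨆ i, |x i| else (∑ i, |x i| ^ p.toReal) ^ (1 / p.toReal)

/-- `S` is metrically `𝓕`-order-sensitive for `T` relative to the norm `nrm`. -/
def MetricallyOS {α Ω : Type*} [MeasurableSpace Ω] [Sub α]
    (𝓕 : Set (Measure Ω)) (A : Set α) (T : Measure Ω → α)
    (S : α → Ω → ℝ) (nrm : α → ℝ) : Prop :=
  ∀ F ∈ 𝓕, ∀ x ∈ A, ∀ z ∈ A,
    nrm (x - T F) ≤ nrm (z - T F) → escore S x F ≤ escore S z F

/-- `S` is strictly metrically `𝓕`-order-sensitive for `T` relative to the norm `nrm`. -/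
def StrictlyMetricallyOS {α Ω : Type*} [MeasurableSpace Ω] [Sub α]
    (𝓕 : Set (Measure Ω)) (A : Set α) (T : Measure Ω → α)
    (S : α → Ω → ℝ) (nrm : α → ℝ) : Prop :=
  MetricallyOS 𝓕 A T S nrm ∧
    ∀ F ∈ 𝓕, ∀ x ∈ A, ∀ z ∈ A,
      nrm (x - T F) < nrm (z - T F) → escore S x F < escore S z F


section Aux

variable {Ω : Type*} [MeasurableSpace Ω] {k : ℕ}

lemma mix_zero (F G : Measure Ω) : mix F G 0 = F := by
  simp [mix]

lemma mix_one (F G : Measure Ω) : mix F G 1 = G := by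
  simp [mix]

lemma escore_mix {α : Type*} (S : α → Ω → ℝ) (y : α) (F G : Measure Ω)
    (hF : Integrable (S y) F) (hG : Integrable (S y) G)
    {lam : ℝ} (h0 : 0 ≤ lam) (h1 : lam ≤ 1) :
    escore S y (mix F G lam) = (1 - lam) * escore S y F + lam * escore S y G := by
  unfold escore mix
  rw [integral_add_measure (hF.smul_measure ofReal_ne_top) (hG.smul_measure ofReal_ne_top),
    integral_smul_measure, integral_smul_measure,
    ENNReal.toReal_ofReal (by linarith : (0:ℝ) ≤ 1 - lam), ENNReal.toReal_ofReal h0]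
  simp [smul_eq_mul]

end Aux

/-- For a convex class `𝓕`, a mixture-continuous surjective functional `T`
and a norm `nrm` on `ℝ^k`: a (strictly) `𝓕`-consistent scoring function `S` is (strictly)
metrically `𝓕`-order-sensitive for `T` relative to `nrm` if and only if for all `F ∈ 𝓕`
and `x, z ∈ A` with `nrm (x - T F) = nrm (z - T F)` one has `S̄(x,F) = S̄(z,F)`. -/
theorem statement8 {Ω : Type*} [MeasurableSpace Ω] {k : ℕ}
    (𝓕 : Set (Measure Ω)) (hprob : ∀ F ∈ 𝓕, IsProbabilityMeasure F)
    (hconv : MixConvex 𝓕)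
    (A : Set (Fin k → ℝ)) (T : Measure Ω → (Fin k → ℝ))
    (hTA : ∀ F ∈ 𝓕, T F ∈ A)
    (hmix : MixContinuous 𝓕 T)
    (hsurj : ∀ x ∈ A, ∃ F ∈ 𝓕, T F = x)
    (S : (Fin k → ℝ) → Ω → ℝ)
    (hSint : ∀ x ∈ A, ∀ F ∈ 𝓕, Integrable (S x) F)
    (nrm : (Fin k → ℝ) → ℝ)
    (hnrm_zero : ∀ x, nrm x = 0 ↔ x = 0)
    (hnrm_add : ∀ x y, nrm (x + y) ≤ nrm x + nrm y)
    (hnrm_smul : ∀ (c : ℝ) (x), nrm (c • x) = |c| * nrm x) :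
    (Consistent 𝓕 A T S →
      (MetricallyOS 𝓕 A T S nrm ↔
        ∀ F ∈ 𝓕, ∀ x ∈ A, ∀ z ∈ A,
          nrm (x - T F) = nrm (z - T F) → escore S x F = escore S z F)) ∧
    (StrictlyConsistent 𝓕 A T S →
      (StrictlyMetricallyOS 𝓕 A T S nrm ↔
        ∀ F ∈ 𝓕, ∀ x ∈ A, ∀ z ∈ A,
          nrm (x - T F) = nrm (z - T F) → escore S x F = escore S z F)) := by

  -- basic norm facts
  have nrm_zero' : nrm 0 = 0 := (hnrm_zero 0).mpr rfl
  have nrm_neg : ∀ v, nrm (-v) = nrm v := by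
    intro v
    rw [← neg_one_smul ℝ v, hnrm_smul]
    simp
  have nrm_nonneg : ∀ v, 0 ≤ nrm v := by
    intro v
    have h := hnrm_add v (-v)
    rw [add_neg_cancel, nrm_zero', nrm_neg] at h
    linarith
  have nrm_sub_le : ∀ a b, nrm a - nrm b ≤ nrm (a - b) := by
    intro a b
    have h := hnrm_add (a - b) b
    rw [sub_add_cancel] at h
    linarith
  -- generalized triangle inequality
  have nrm_sum : ∀ (s : Finset (Fin k)) (f : Fin k → (Fin k → ℝ)),
      nrm (∑ i ∈ s, f i) ≤ ∑ i ∈ s, nrm (f i) := by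
    intro s f
    induction s using Finset.cons_induction with
    | empty => simp [nrm_zero']
    | cons a s ha ih =>
      rw [Finset.sum_cons, Finset.sum_cons]
      exact le_trans (hnrm_add _ _) (by linarith)
  have hsingle : ∀ (i : Fin k) (c : ℝ), (Pi.single i c : Fin k → ℝ) = c • ((Pi.single i 1 : Fin k → ℝ)) := by
    intro i c
    funext j
    by_cases h : j = i <;> simp [Pi.single_apply, h]
  have nrm_bound : ∀ v : Fin k → ℝ, nrm v ≤ (∑ i, nrm ((Pi.single i 1 : Fin k → ℝ))) * ‖v‖ := by
    intro v
    have h1 : nrm v ≤ ∑ i, nrm ((Pi.single i (v i) : Fin k → ℝ)) := by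
      have := nrm_sum Finset.univ (fun i => (Pi.single i (v i) : Fin k → ℝ))
      rwa [Finset.univ_sum_single] at this
    have h2 : ∀ i : Fin k, nrm ((Pi.single i (v i) : Fin k → ℝ)) ≤ ‖v‖ * nrm ((Pi.single i 1 : Fin k → ℝ)) := by
      intro i
      rw [hsingle i (v i), hnrm_smul]
      have hvi : |v i| ≤ ‖v‖ := by
        have := norm_le_pi_norm v i
        rwa [Real.norm_eq_abs] at this
      exact mul_le_mul_of_nonneg_right hvi (nrm_nonneg _)
    calc nrm v ≤ ∑ i, nrm ((Pi.single i (v i) : Fin k → ℝ)) := h1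
      _ ≤ ∑ i, ‖v‖ * nrm ((Pi.single i 1 : Fin k → ℝ)) := Finset.sum_le_sum (fun i _ => h2 i)
      _ = (∑ i, nrm ((Pi.single i 1 : Fin k → ℝ))) * ‖v‖ := by rw [← Finset.mul_sum, mul_comm]
  -- continuity of nrm
  have contnrm : Continuous nrm := by
    set C : ℝ := ∑ i, nrm ((Pi.single i 1 : Fin k → ℝ)) with hC
    have hC0 : 0 ≤ C := Finset.sum_nonneg fun i _ => nrm_nonneg _
    refine (LipschitzWith.of_dist_le_mul (K := C.toNNReal) ?_).continuous
    intro a b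
    rw [Real.dist_eq, dist_eq_norm, Real.coe_toNNReal C hC0]
    have h1 := nrm_sub_le a b
    have h2 := nrm_sub_le b a
    have h3 := nrm_bound (a - b)
    have h4 : nrm (b - a) = nrm (a - b) := by rw [← nrm_neg (a - b), neg_sub]
    rw [abs_le]
    constructor <;> [linarith; linarith]
  -- existence of an intermediate point on the mixture path
  have hexists : ∀ F ∈ 𝓕, ∀ z ∈ A, ∀ r : ℝ, 0 ≤ r → r < nrm (z - T F) →
      ∃ G ∈ 𝓕, T G = z ∧ ∃ lam, 0 ≤ lam ∧ lam < 1 ∧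
        nrm (T (mix F G lam) - T F) = r := by
    intro F hF z hz r hr hrlt
    obtain ⟨G, hG, hGz⟩ := hsurj z hz
    have hcont : ContinuousOn (fun lam => nrm (T (mix F G lam) - T F)) (Set.Icc 0 1) :=
      contnrm.comp_continuousOn ((hmix F hF G hG).sub continuousOn_const)
    have h0 : nrm (T (mix F G 0) - T F) = 0 := by rw [mix_zero, sub_self, nrm_zero']
    have h1 : nrm (T (mix F G 1) - T F) = nrm (z - T F) := by rw [mix_one, hGz]
    have hIVT := intermediate_value_Icc zero_le_one hcont
    have hr' : r ∈ Set.Icc (nrm (T (mix F G 0) - T F)) (nrm (T (mix F G 1) - T F)) := by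
      rw [h0, h1]; exact ⟨hr, hrlt.le⟩
    obtain ⟨lam, hlam, heq⟩ := hIVT hr'
    refine ⟨G, hG, hGz, lam, hlam.1, ?_, heq⟩
    rcases lt_or_eq_of_le hlam.2 with h | h
    · exact h
    · exfalso
      rw [h] at heq
      simp only at heq
      rw [h1] at heq
      exact (ne_of_lt hrlt) heq.symm
  -- nonstrict step
  have step_lt : ∀ (_ : ∀ F ∈ 𝓕, ∀ x ∈ A, ∀ z ∈ A,
        nrm (x - T F) = nrm (z - T F) → escore S x F = escore S z F)
      (_ : Consistent 𝓕 A T S),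
      ∀ F ∈ 𝓕, ∀ x ∈ A, ∀ z ∈ A, nrm (x - T F) < nrm (z - T F) →
        escore S x F ≤ escore S z F := by
    intro hcond hcons F hF x hx z hz hlt
    obtain ⟨G, hG, hGz, lam, hl0, hl1, heq⟩ :=
      hexists F hF z hz _ (nrm_nonneg _) hlt
    have hmem : mix F G lam ∈ 𝓕 := hconv F hF G hG lam ⟨hl0, hl1.le⟩
    set w := T (mix F G lam) with hw
    have hwA : w ∈ A := hTA _ hmem
    have hxw : escore S x F = escore S w F := hcond F hF x hx w hwA (by rw [heq])
    have h1 : escore S w (mix F G lam) ≤ escore S z (mix F G lam) := hcons _ hmem z hz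
    rw [escore_mix S w F G (hSint w hwA F hF) (hSint w hwA G hG) hl0 hl1.le,
        escore_mix S z F G (hSint z hz F hF) (hSint z hz G hG) hl0 hl1.le] at h1
    have h2 : escore S z G ≤ escore S w G := by
      have := hcons G hG w hwA
      rwa [hGz] at this
    rw [hxw]
    nlinarith [mul_le_mul_of_nonneg_left h2 hl0]
  -- strict step
  have step_strict : ∀ (_ : ∀ F ∈ 𝓕, ∀ x ∈ A, ∀ z ∈ A,
        nrm (x - T F) = nrm (z - T F) → escore S x F = escore S z F)
      (_ : StrictlyConsistent 𝓕 A T S),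
      ∀ F ∈ 𝓕, ∀ x ∈ A, ∀ z ∈ A, nrm (x - T F) < nrm (z - T F) →
        escore S x F < escore S z F := by
    intro hcond hsc F hF x hx z hz hlt
    obtain ⟨G, hG, hGz, lam, hl0, hl1, heq⟩ :=
      hexists F hF z hz _ (nrm_nonneg _) hlt
    have hmem : mix F G lam ∈ 𝓕 := hconv F hF G hG lam ⟨hl0, hl1.le⟩
    set w := T (mix F G lam) with hw
    have hwA : w ∈ A := hTA _ hmem
    have hxw : escore S x F = escore S w F := hcond F hF x hx w hwA (by rw [heq])
    have hne : z ≠ w := by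
      intro h
      rw [h] at hlt
      rw [heq] at hlt
      exact lt_irrefl _ hlt
    have h1 : escore S w (mix F G lam) < escore S z (mix F G lam) := by
      have hle : escore S w (mix F G lam) ≤ escore S z (mix F G lam) :=
        hsc.1 _ hmem z hz
      rcases hle.lt_or_eq with h | h
      · exact h
      · exact absurd (hsc.2 _ hmem z hz h.symm) hne
    rw [escore_mix S w F G (hSint w hwA F hF) (hSint w hwA G hG) hl0 hl1.le,
        escore_mix S z F G (hSint z hz F hF) (hSint z hz G hG) hl0 hl1.le] at h1
    have h2 : escore S z G ≤ escore S w G := by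
      have := hsc.1 G hG w hwA
      rwa [hGz] at this
    rw [hxw]
    nlinarith [mul_le_mul_of_nonneg_left h2 hl0]
  constructor
  · intro hcons
    constructor
    · intro hOS F hF x hx z hz hEq
      exact le_antisymm (hOS F hF x hx z hz hEq.le) (hOS F hF z hz x hx hEq.ge)
    · intro hcond F hF x hx z hz hle
      rcases hle.lt_or_eq with h | h
      · exact step_lt hcond hcons F hF x hx z hz h
      · exact (hcond F hF x hx z hz h).le
  · intro hsc
    constructor
    · intro hOS F hF x hx z hz hEq
      exact le_antisymm (hOS.1 F hF x hx z hz hEq.le) (hOS.1 F hF z hz x hx hEq.ge)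
    · intro hcond
      refine ⟨?_, fun F hF x hx z hz h => step_strict hcond hsc F hF x hx z hz h⟩
      intro F hF x hx z hz hle
      rcases hle.lt_or_eq with h | h
      · exact (step_strict hcond hsc F hF x hx z hz h).le
      · exact (hcond F hF x hx z hz h).le
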